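/- Define μ(n) := n^{1/(1−n)} for integers n ≥ 2 (equivalently μ(n) = n^{-1/(n-1)}, the maximizer of λ ↦ λ − λ^n on [0,1]). Then lim_{n→∞} μ(n)^n / (1 + μ(n)^n − μ(n)) = 0. -/

import Mathlib

open Filter

lemma stmt_10_aux (n : ℕ) (hn : 2 ≤ n) :
    0 ≤ ((n : ℝ) ^ ((1 : ℝ) / (1 - (n : ℝ)))) ^ n /
          (1 + ((n : ℝ) ^ ((1 : ℝ) / (1 - (n : ℝ)))) ^ n -
            (n : ℝ) ^ ((1 : ℝ) / (1 - (n : ℝ)))) ∧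
    ((n : ℝ) ^ ((1 : ℝ) / (1 - (n : ℝ)))) ^ n /
          (1 + ((n : ℝ) ^ ((1 : ℝ) / (1 - (n : ℝ)))) ^ n -
            (n : ℝ) ^ ((1 : ℝ) / (1 - (n : ℝ)))) ≤ (Real.log n)⁻¹ := by
  set N : ℝ := (n : ℝ) with hNdef
  have hN2 : (2 : ℝ) ≤ N := by exact_mod_cast Nat.cast_le.mpr (show (2:ℕ) ≤ n from hn)
  have hN1 : (1 : ℝ) < N := by linarith
  have hNpos : (0 : ℝ) < N := by linarith
  have hN1pos : (0 : ℝ) < N - 1 := by linarith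
  have hL : 0 < Real.log N := Real.log_pos hN1
  set L : ℝ := Real.log N with hLdef
  set t : ℝ := L / (N - 1) with htdef
  have ht : 0 < t := div_pos hL hN1pos
  -- μ = exp (-t)
  have hμ : N ^ ((1 : ℝ) / (1 - N)) = Real.exp (-t) := by
    rw [Real.rpow_def_of_pos hNpos]
    congr 1
    have h1N : (1 : ℝ) - N ≠ 0 := by linarith
    rw [htdef, hLdef]
    field_simp
    ring
  set μ : ℝ := N ^ ((1 : ℝ) / (1 - N)) with hμdef
  clear_value μ
  clear hμdef
  have hμpos : 0 < μ := by rw [hμ]; exact Real.exp_pos _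
  -- μ^n = μ / N
  have hpow : μ ^ n = μ / N := by
    rw [hμ, ← Real.exp_nat_mul]
    have : (n : ℝ) * (-t) = -L + (-t) := by
      rw [htdef]; field_simp; ring
    rw [this, Real.exp_add, Real.exp_neg, Real.exp_log hNpos]
    ring
  -- key inequality : 1 + t ≤ exp t  ⇒  μ * (1 + t) ≤ 1
  have hkey : μ * (1 + t) ≤ 1 := by
    have h1 : 1 + t ≤ Real.exp t := by
      have := Real.add_one_le_exp t; linarith
    have h2 : μ * (1 + t) ≤ μ * Real.exp t :=
      mul_le_mul_of_nonneg_left h1 hμpos.le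
    have h3 : μ * Real.exp t = 1 := by
      rw [hμ, ← Real.exp_add]; simp
    linarith
  -- denominator bound
  have hDlow : μ * (t + 1 / N) ≤ 1 + μ ^ n - μ := by
    rw [hpow]
    have : μ * t ≤ 1 - μ := by nlinarith
    have h4 : μ * (1 / N) = μ / N := by ring
    nlinarith
  have hDpos0 : 0 < μ * (t + 1 / N) := by positivity
  have hDpos : 0 < 1 + μ ^ n - μ := lt_of_lt_of_le hDpos0 hDlow
  constructor
  · positivity
  · have h5 : μ ^ n / (1 + μ ^ n - μ) ≤ μ ^ n / (μ * (t + 1 / N)) :=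
      div_le_div_of_nonneg_left (by positivity) hDpos0 hDlow
    have h6 : μ ^ n / (μ * (t + 1 / N)) = 1 / (N * t + 1) := by
      rw [hpow]
      have hμne : μ ≠ 0 := hμpos.ne'
      have hNne : N ≠ 0 := hNpos.ne'
      have hD : N * t + 1 ≠ 0 := by positivity
      field_simp
    have h7 : L ≤ N * t + 1 := by
      have : L ≤ N * t := by
        rw [htdef, ← mul_div_assoc, le_div_iff₀ hN1pos]
        nlinarith
      linarith
    have h8 : 1 / (N * t + 1) ≤ 1 / L := by
      apply div_le_div_of_nonneg_left one_pos.le hL h7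
    calc μ ^ n / (1 + μ ^ n - μ) ≤ 1 / (N * t + 1) := by rw [← h6]; exact h5
      _ ≤ 1 / L := h8
      _ = (Real.log N)⁻¹ := one_div L

theorem stmt_10 :
    Tendsto
      (fun n : ℕ =>
        ((n : ℝ) ^ ((1 : ℝ) / (1 - (n : ℝ)))) ^ n /
          (1 + ((n : ℝ) ^ ((1 : ℝ) / (1 - (n : ℝ)))) ^ n -
            (n : ℝ) ^ ((1 : ℝ) / (1 - (n : ℝ)))))
      atTop (nhds 0) := by
  have h0 : Tendsto (fun n : ℕ => (Real.log n)⁻¹) atTop (nhds 0) :=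
    tendsto_inv_atTop_zero.comp (Real.tendsto_log_atTop.comp tendsto_natCast_atTop_atTop)
  refine squeeze_zero' ?_ ?_ h0
  · filter_upwards [eventually_ge_atTop 2] with n hn
    exact (stmt_10_aux n hn).1
  · filter_upwards [eventually_ge_atTop 2] with n hn
    exact (stmt_10_aux n hn).2
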